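/- Let 𝒢* be the AMP essential graph of an equivalence class 𝒢, and let Σ be the partition of the vertex set into strong-equivalence classes (connected components of the graph of strong lines of 𝒢*). If a ∈ α and b ∈ β for distinct classes α, β ∈ Σ, and a−b is a weak line of 𝒢*, then a'−b' is a weak line of 𝒢* for every pair a' ∈ α, b' ∈ β that is adjacent in 𝒢*, and moreover the induced subgraphs of 𝒢* on α and on β are complete. -/

import Mathlib

/-- A mixed graph: directed edges (arrows) and undirected edges (lines),
no loops, at most one edge between any two vertices. -/
structure MixedGraph (V : Type) where
  arrow : V → V → Prop
  line : V → V → Prop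
  line_symm : ∀ a b, line a b → line b a
  arrow_irrefl : ∀ a, ¬ arrow a a
  line_irrefl : ∀ a, ¬ line a a
  not_arrow_line : ∀ a b, arrow a b → ¬ line a b
  not_arrow_arrow : ∀ a b, arrow a b → ¬ arrow b a

namespace MixedGraph

variable {V : Type}

/-- `a` and `b` are adjacent (joined by some edge). -/
def adj (G : MixedGraph V) (a b : V) : Prop := G.arrow a b ∨ G.arrow b a ∨ G.line a b

/-- A step of a semi-directed path: a forward arrow or a line. -/
def step (G : MixedGraph V) (a b : V) : Prop := G.arrow a b ∨ G.line a b

/-- A semi-directed cycle of length `k ≥ 3`: `v 0, …, v k` with `v k = v 0`,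
each step an arrow or a line, at least one arrow, vertices distinct. -/
def IsSemiDirectedCycle (G : MixedGraph V) (k : ℕ) (v : ℕ → V) : Prop :=
  3 ≤ k ∧ v k = v 0 ∧ (∀ i, i < k → G.step (v i) (v (i + 1))) ∧
    (∃ i, i < k ∧ G.arrow (v i) (v (i + 1))) ∧
    (∀ i j, i < j → j < k → v i ≠ v j)

/-- A chain graph is a mixed graph with no semi-directed cycle. -/
def IsChainGraph (G : MixedGraph V) : Prop := ∀ k v, ¬ G.IsSemiDirectedCycle k v

/-- A triplex `({a,c}, b)`: `a, c` nonadjacent and the induced subgraph on `{a,b,c}`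
is `a→b←c`, `a→b−c`, or `a−b←c`. -/
def triplex (G : MixedGraph V) (a b c : V) : Prop :=
  a ≠ c ∧ ¬ G.adj a c ∧
    ((G.arrow a b ∧ G.arrow c b) ∨ (G.arrow a b ∧ G.line b c) ∨ (G.line a b ∧ G.arrow c b))

def sameSkeleton (G H : MixedGraph V) : Prop := ∀ a b, G.adj a b ↔ H.adj a b

def sameTriplexes (G H : MixedGraph V) : Prop := ∀ a b c, G.triplex a b c ↔ H.triplex a b c

end MixedGraph

/-- The AMP Markov equivalence class of a chain graph `G0`: all chain graphs with the
same skeleton and the same triplexes as `G0`. -/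
def AMPClass {V : Type} (G0 : MixedGraph V) : Set (MixedGraph V) :=
  {G | G.IsChainGraph ∧ G.sameSkeleton G0 ∧ G.sameTriplexes G0}

/-- `E` is the AMP essential graph of the class of `G0`: same skeleton; `a→b` is an arrow
of `E` iff it occurs in some member and its reversal in none; all other edges are lines. -/
def IsEssentialGraph {V : Type} (G0 E : MixedGraph V) : Prop :=
  E.sameSkeleton G0 ∧
    (∀ a b, E.arrow a b ↔
      (∃ G ∈ AMPClass G0, G.arrow a b) ∧ ∀ G ∈ AMPClass G0, ¬ G.arrow b a) ∧
    (∀ a b, E.line a b ↔ G0.adj a b ∧ ¬ E.arrow a b ∧ ¬ E.arrow b a)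

/-- A line of the essential graph is strong if it occurs as a line in every member. -/
def StrongLine {V : Type} (G0 E : MixedGraph V) (a b : V) : Prop :=
  E.line a b ∧ ∀ G ∈ AMPClass G0, G.line a b

/-- A line of the essential graph is weak if both orientations occur among members. -/
def WeakLine {V : Type} (G0 E : MixedGraph V) (a b : V) : Prop :=
  E.line a b ∧ (∃ G ∈ AMPClass G0, G.arrow a b) ∧ (∃ G ∈ AMPClass G0, G.arrow b a)

/-- An arrow of the essential graph is strong if it occurs as an arrow in every member. -/
def StrongArrow {V : Type} (G0 E : MixedGraph V) (a b : V) : Prop :=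
  E.arrow a b ∧ ∀ G ∈ AMPClass G0, G.arrow a b

/-- Two vertices are strongly equivalent if joined by a path of strong lines. -/
def StronglyEquiv {V : Type} (G0 E : MixedGraph V) (x y : V) : Prop :=
  Relation.ReflTransGen (StrongLine G0 E) x y


section Aux

variable {V : Type}

open MixedGraph

lemma MixedGraph.adj_symm (G : MixedGraph V) {x y : V} (h : G.adj x y) : G.adj y x := by
  rcases h with h | h | h
  · exact Or.inr (Or.inl h)
  · exact Or.inl h
  · exact Or.inr (Or.inr (G.line_symm _ _ h))

lemma no_cyc {G : MixedGraph V} (hG : G.IsChainGraph) (l : List V) (hne : l ≠ [])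
    (h3 : 3 ≤ l.length) (hnd : l.Nodup) (hch : List.Chain' G.step l)
    (hw : G.arrow (l.getLast hne) (l.head hne)) : False := by
  set d := l.head hne with hd
  have hlpos : 0 < l.length := List.length_pos_iff.mpr hne
  have h0 : l.getD 0 d = d := by
    cases l with
    | nil => exact absurd rfl hne
    | cons x t => simp [hd]
  have harr : G.arrow (l.getD (l.length - 1) d) (l.getD (l.length - 1 + 1) d) := by
    have hlen : l.length - 1 + 1 = l.length := by omega
    rw [hlen, List.getD_eq_default _ _ (le_refl _), List.getD_eq_getElem _ _ (by omega),
      ← List.getLast_eq_getElem hne]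
    exact hw
  apply hG l.length (fun i => l.getD i d)
  refine ⟨h3, ?_, ?_, ⟨l.length - 1, by omega, harr⟩, ?_⟩
  · show l.getD l.length d = l.getD 0 d
    rw [List.getD_eq_default _ _ (le_refl _), h0]
  · intro i hi
    show G.step (l.getD i d) (l.getD (i + 1) d)
    by_cases hi' : i + 1 < l.length
    · rw [List.getD_eq_getElem _ _ hi, List.getD_eq_getElem _ _ hi']
      exact List.isChain_iff_getElem.mp hch i (by omega)
    · have hieq : i = l.length - 1 := by omega
      subst hieq
      exact Or.inl harr
  · intro i j hij hj
    show l.getD i d ≠ l.getD j d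
    intro hcontra
    rw [List.getD_eq_getElem _ _ (by omega), List.getD_eq_getElem _ _ hj] at hcontra
    have := hnd.getElem_inj_iff.mp hcontra
    omega

variable {G0 E : MixedGraph V}

lemma strongLine_symm {x y : V} (h : StrongLine G0 E x y) : StrongLine G0 E y x :=
  ⟨E.line_symm _ _ h.1, fun G hG => G.line_symm _ _ (h.2 G hG)⟩

lemma stronglyEquiv_symm {x y : V} (h : StronglyEquiv G0 E x y) : StronglyEquiv G0 E y x := by
  induction h with
  | refl => exact .refl
  | tail _ hzy ih => exact Relation.ReflTransGen.head (strongLine_symm hzy) ih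

lemma weakLine_symm {x y : V} (h : WeakLine G0 E x y) : WeakLine G0 E y x :=
  ⟨E.line_symm _ _ h.1, h.2.2, h.2.1⟩

lemma weakLine_ne {x y : V} (h : WeakLine G0 E x y) : x ≠ y := by
  intro hxy; subst hxy; exact E.line_irrefl _ h.1

lemma strongLine_ne {x y : V} (h : StrongLine G0 E x y) : x ≠ y := by
  intro hxy; subst hxy; exact E.line_irrefl _ h.1

/-- adjacency transfers from `E` to members. -/
lemma eadj_iff (hE : IsEssentialGraph G0 E) {G : MixedGraph V} (hG : G ∈ AMPClass G0)
    (x y : V) : E.adj x y ↔ G.adj x y :=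
  (hE.1 x y).trans (hG.2.1 x y).symm

lemma weakLine_eadj {x y : V} (h : WeakLine G0 E x y) : E.adj x y :=
  Or.inr (Or.inr h.1)

/-- The one-step propagation lemma: if `a—a'` is a strong line and `a—b` a weak
line with `a' ≠ b`, then `a'—b` is a weak line. -/
lemma stepWeak (hE : IsEssentialGraph G0 E) {a a' b : V}
    (hs : StrongLine G0 E a a') (hw : WeakLine G0 E a b) (hne : a' ≠ b) :
    WeakLine G0 E a' b := by
  obtain ⟨hlineE, ⟨G1, hG1, h1⟩, ⟨G2, hG2, h2⟩⟩ := hw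
  have hab : a ≠ b := fun h => E.line_irrefl _ (h ▸ hlineE)
  have haa' : a ≠ a' := strongLine_ne hs
  -- adjacency of a' and b in E, via the triplex argument
  have hadj : E.adj a' b := by
    by_contra hna
    have hna2 : ¬ G2.adj a' b := fun h => hna ((eadj_iff hE hG2 a' b).mpr h)
    have ht2 : G2.triplex a' a b :=
      ⟨hne, hna2, Or.inr (Or.inr ⟨G2.line_symm _ _ (hs.2 G2 hG2), h2⟩)⟩
    have ht1 : G1.triplex a' a b := (hG1.2.2 a' a b).mpr ((hG2.2.2 a' a b).mp ht2)
    rcases ht1.2.2 with ⟨_, h⟩ | ⟨_, h⟩ | ⟨_, h⟩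
    · exact G1.not_arrow_arrow _ _ h1 h
    · exact G1.not_arrow_line _ _ h1 h
    · exact G1.not_arrow_arrow _ _ h1 h
  -- in G1 (which has a→b), the edge a'–b must be a'→b
  have harr1 : G1.arrow a' b := by
    have : G1.adj a' b := (eadj_iff hE hG1 a' b).mp hadj
    have hl1 : G1.line a' a := G1.line_symm _ _ (hs.2 G1 hG1)
    rcases this with h | h | h
    · exact h
    · exact (no_cyc hG1.1 [b, a', a] (by simp) (by simp)
          (by simp [hab.symm, hne.symm, haa'.symm])
          (List.IsChain.cons_cons (Or.inl h) (List.IsChain.cons_cons (Or.inr hl1) (List.isChain_singleton _)))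
          (by simpa using h1)).elim
    · exact (no_cyc hG1.1 [b, a', a] (by simp) (by simp)
          (by simp [hab.symm, hne.symm, haa'.symm])
          (List.IsChain.cons_cons (Or.inr (G1.line_symm _ _ h)) (List.IsChain.cons_cons (Or.inr hl1)
            (List.isChain_singleton _)))
          (by simpa using h1)).elim
  -- in G2 (which has b→a), the edge a'–b must be b→a'
  have harr2 : G2.arrow b a' := by
    have : G2.adj a' b := (eadj_iff hE hG2 a' b).mp hadj
    have hl2 : G2.line a a' := hs.2 G2 hG2
    rcases this with h | h | h
    · exact (no_cyc hG2.1 [a, a', b] (by simp) (by simp)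
          (by simp [haa', hab, hne])
          (List.IsChain.cons_cons (Or.inr hl2) (List.IsChain.cons_cons (Or.inl h) (List.isChain_singleton _)))
          (by simpa using h2)).elim
    · exact h
    · exact (no_cyc hG2.1 [a, a', b] (by simp) (by simp)
          (by simp [haa', hab, hne])
          (List.IsChain.cons_cons (Or.inr hl2) (List.IsChain.cons_cons (Or.inr h) (List.isChain_singleton _)))
          (by simpa using h2)).elim
  -- conclude a'—b is a weak line of E
  have hG0adj : G0.adj a' b := (hE.1 a' b).mp hadj
  have hnEa'b : ¬ E.arrow a' b := fun h => ((hE.2.1 a' b).mp h).2 G2 hG2 harr2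
  have hnEba' : ¬ E.arrow b a' := fun h => ((hE.2.1 b a').mp h).2 G1 hG1 harr1
  exact ⟨(hE.2.2 a' b).mpr ⟨hG0adj, hnEa'b, hnEba'⟩, ⟨G1, hG1, harr1⟩, ⟨G2, hG2, harr2⟩⟩

/-- Propagation along a strong-line path (one side). -/
lemma propWeak (hE : IsEssentialGraph G0 E) {a a' b : V}
    (hs : StronglyEquiv G0 E a a') (hdist : ¬ StronglyEquiv G0 E a b)
    (hw : WeakLine G0 E a b) : WeakLine G0 E a' b := by
  induction hs with
  | refl => exact hw
  | @tail c c' hac hcc' ih =>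
      refine stepWeak hE hcc' ih ?_
      intro hc'b
      exact hdist (hc'b ▸ hac.tail hcc')

/-- Propagation on both sides. -/
lemma propWeak2 (hE : IsEssentialGraph G0 E) {a b a' b' : V}
    (hdist : ¬ StronglyEquiv G0 E a b) (hw : WeakLine G0 E a b)
    (ha : StronglyEquiv G0 E a a') (hb : StronglyEquiv G0 E b b') :
    WeakLine G0 E a' b' := by
  have h1 : WeakLine G0 E a' b := propWeak hE ha hdist hw
  have hd2 : ¬ StronglyEquiv G0 E b a' := fun h => hdist (ha.trans (stronglyEquiv_symm h))
  exact weakLine_symm (propWeak hE hb hd2 (weakLine_symm h1))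

/-- The strong-line graph as a simple graph. -/
def strongSG (G0 E : MixedGraph V) : SimpleGraph V where
  Adj x y := StrongLine G0 E x y
  symm := ⟨fun _ _ h => strongLine_symm h⟩
  loopless := ⟨fun x h => E.line_irrefl x h.1⟩

/-- Forced orientation: if `a'` and `a''` are nonadjacent, both weak-lined to `b`,
and a member `G` has `a'→b`, then `G` has `b→a''`. -/
lemma forceArrow (hE : IsEssentialGraph G0 E) {b a' a'' : V} (h1 : a'' ≠ a')
    (hna : ¬ E.adj a'' a') (hw' : WeakLine G0 E a' b) (hw'' : WeakLine G0 E a'' b)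
    {G : MixedGraph V} (hG : G ∈ AMPClass G0) (harr : G.arrow a' b) : G.arrow b a'' := by
  obtain ⟨Gr, hGr, hr⟩ := hw'.2.2
  have htfalse : ¬ Gr.triplex a'' b a' := by
    rintro ⟨_, _, ⟨_, h⟩ | ⟨_, h⟩ | ⟨_, h⟩⟩
    · exact Gr.not_arrow_arrow _ _ hr h
    · exact Gr.not_arrow_line _ _ hr h
    · exact Gr.not_arrow_arrow _ _ hr h
  have htG : ¬ G.triplex a'' b a' := fun h =>
    htfalse ((hGr.2.2 a'' b a').mpr ((hG.2.2 a'' b a').mp h))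
  have hnaG : ¬ G.adj a'' a' := fun h => hna ((eadj_iff hE hG a'' a').mpr h)
  have hadj : G.adj a'' b := (eadj_iff hE hG a'' b).mp (weakLine_eadj hw'')
  rcases hadj with h | h | h
  · exact absurd ⟨h1, hnaG, Or.inl ⟨h, harr⟩⟩ htG
  · exact h
  · exact absurd ⟨h1, hnaG, Or.inr (Or.inr ⟨h, harr⟩)⟩ htG

lemma chain'_step_of_strong {G : MixedGraph V} (hG : G ∈ AMPClass G0) :
    ∀ (l : List V), List.Chain' (StrongLine G0 E) l → List.Chain' G.step l := by
  intro l hl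
  exact hl.imp (fun _ _ h => Or.inr (h.2 G hG))


/-- Extract a nodup strong-line path. -/
lemma exists_strong_path (G0 E : MixedGraph V) {x y : V} (h : StronglyEquiv G0 E x y) :
    ∃ t : List V, (x :: t).Nodup ∧ List.Chain' (StrongLine G0 E) (x :: t) ∧
      (x :: t).getLast? = some y ∧ ∀ z ∈ x :: t, StronglyEquiv G0 E x z := by
  classical
  have hreach : (strongSG G0 E).Reachable x y :=
    (SimpleGraph.reachable_iff_reflTransGen _ _).mpr h
  obtain ⟨w⟩ := hreach
  have hsup := w.toPath.1.support_eq_cons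
  refine ⟨w.toPath.1.support.tail, ?_, ?_, ?_, ?_⟩
  · rw [← hsup]; exact w.toPath.2.support_nodup
  · rw [← hsup]; exact w.toPath.1.isChain_adj_support
  · rw [← hsup, List.getLast?_eq_getLast w.toPath.1.support_ne_nil]
    simp
  · intro z hz
    rw [← hsup] at hz
    exact (SimpleGraph.reachable_iff_reflTransGen _ _).mp ⟨w.toPath.1.takeUntil z hz⟩

/-- Completeness of the class of `a`. -/
lemma completeSide (hE : IsEssentialGraph G0 E) {a b : V}
    (hdist : ¬ StronglyEquiv G0 E a b) (hw : WeakLine G0 E a b) :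
    ∀ a' a'', StronglyEquiv G0 E a a' → StronglyEquiv G0 E a a'' → a' ≠ a'' →
      E.adj a' a'' := by
  intro a' a'' ha' ha'' hne
  by_contra hna
  have hw' : WeakLine G0 E a' b := propWeak hE ha' hdist hw
  have hw'' : WeakLine G0 E a'' b := propWeak hE ha'' hdist hw
  obtain ⟨G1, hG1, harr⟩ := hw'.2.1
  have harr2 : G1.arrow b a'' :=
    forceArrow hE hne.symm (fun h => hna (E.adj_symm h)) hw' hw'' hG1 harr
  obtain ⟨t, hnd, hch, hlastq, hmem⟩ :=
    exists_strong_path G0 E ((stronglyEquiv_symm ha'').trans ha')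
  have htne : t ≠ [] := by
    rintro rfl
    simp at hlastq
    exact hne hlastq.symm
  have hlast : (a'' :: t).getLast (by simp) = a' := by
    rw [List.getLast?_eq_getLast (l := a'' :: t) (by simp)] at hlastq
    exact Option.some_injective _ hlastq
  have hbns : b ∉ a'' :: t := fun hb => hdist (ha''.trans (hmem b hb))
  refine no_cyc hG1.1 (b :: a'' :: t) (by simp) ?_ ?_ ?_ ?_
  · have : t.length ≠ 0 := fun h => htne (List.length_eq_zero_iff.mp h)
    simp only [List.length_cons]
    omega
  · rw [List.nodup_cons]
    exact ⟨hbns, hnd⟩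
  · exact List.IsChain.cons_cons (Or.inl harr2) (chain'_step_of_strong hG1 _ hch)
  · have hgl : (b :: a'' :: t).getLast (by simp) = a' := by
      rw [List.getLast_cons (by simp : a'' :: t ≠ [])]
      exact hlast
    rw [hgl]
    exact harr

end Aux

/-- Lemma 3.6(d): if `a−b` is a weak line of the essential graph between distinct
strong-equivalence classes `α = [a]` and `β = [b]`, then every `𝒢*`-adjacent pair
`a' ∈ α`, `b' ∈ β` is joined by a weak line, and the induced subgraphs on `α` and
on `β` are complete. -/
theorem stmt10 {V : Type} (G0 E : MixedGraph V) (h0 : G0.IsChainGraph)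
    (hE : IsEssentialGraph G0 E) (a b : V)
    (hdist : ¬ StronglyEquiv G0 E a b) (hw : WeakLine G0 E a b) :
    (∀ a' b', StronglyEquiv G0 E a a' → StronglyEquiv G0 E b b' → E.adj a' b' →
      WeakLine G0 E a' b') ∧
    (∀ a' a'', StronglyEquiv G0 E a a' → StronglyEquiv G0 E a a'' → a' ≠ a'' →
      E.adj a' a'') ∧
    (∀ b' b'', StronglyEquiv G0 E b b' → StronglyEquiv G0 E b b'' → b' ≠ b'' →
      E.adj b' b'') := by
  refine ⟨fun a' b' ha hb _ => propWeak2 hE hdist hw ha hb, completeSide hE hdist hw, ?_⟩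
  have hdist' : ¬ StronglyEquiv G0 E b a := fun h => hdist (stronglyEquiv_symm h)
  exact completeSide hE hdist' (weakLine_symm hw)
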